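/- Define B(r) to be the number of tuples (F, C₊, C₋) of nonnegative integers satisfying F ≡ C₋ ≡ r (mod 2) and F + 2(C₊ + C₋) ≡ r + 2 (mod 4) and F + 2(C₊ + C₋) ≤ r + 2. Then B(r) = (1/192)(r+4)(r+8)(r+12) if r ≡ 0 (mod 4), B(r) = (1/192)(r+6)(r+8)(r+10) if r ≡ 2 (mod 4), B(r) = (1/192)(r+3)(r+5)(r+7) if r ≡ 1 (mod 4), and B(r) = (1/192)(r+1)(r+5)(r+9) if r ≡ 3 (mod 4). -/

import Mathlib

open Finset

/-- Solutions of `a + b + 2c = M`. -/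
def Vset (M : ℕ) : Finset (ℕ × ℕ × ℕ) :=
  ((Finset.range (M+1)) ×ˢ (Finset.range (M+1)) ×ˢ (Finset.range (M+1))).filter
    (fun q => q.1 + q.2.1 + 2 * q.2.2 = M)

/-- Solutions of `a + b + 2c + 2d = M`. -/
def Uset (M : ℕ) : Finset (ℕ × ℕ × ℕ × ℕ) :=
  ((Finset.range (M+1)) ×ˢ (Finset.range (M+1)) ×ˢ (Finset.range (M+1)) ×ˢ (Finset.range (M+1))).filter
    (fun q => q.1 + q.2.1 + 2 * q.2.2.1 + 2 * q.2.2.2 = M)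

lemma vrec (M : ℕ) : (Vset (M+2)).card = (Vset M).card + (M+3) := by
  classical
  have hsplit := Finset.card_filter_add_card_filter_not
    (s := Vset (M+2)) (p := fun q => q.2.2 = 0)
  have h1 : ((Vset (M+2)).filter (fun q => ¬ q.2.2 = 0)).card = (Vset M).card := by
    apply Finset.card_nbij' (fun q => (q.1, q.2.1, q.2.2 - 1)) (fun q => (q.1, q.2.1, q.2.2 + 1))
    · intro q hq
      obtain ⟨a, b, c⟩ := q
      simp only [Vset, Finset.mem_coe, Finset.mem_filter, Finset.mem_product, Finset.mem_range, Prod.mk.injEq, true_and, and_true] at hq ⊢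
      omega
    · intro q hq
      obtain ⟨a, b, c⟩ := q
      simp only [Vset, Finset.mem_coe, Finset.mem_filter, Finset.mem_product, Finset.mem_range, Prod.mk.injEq, true_and, and_true] at hq ⊢
      omega
    · intro q hq
      obtain ⟨a, b, c⟩ := q
      simp only [Vset, Finset.mem_coe, Finset.mem_filter, Finset.mem_product, Finset.mem_range, Prod.mk.injEq, true_and, and_true] at hq
      simp only [Prod.mk.injEq, true_and, and_true]
      omega
    · intro q hq
      obtain ⟨a, b, c⟩ := q
      simp only [Prod.mk.injEq, true_and, and_true]
      omega
  have h2 : ((Vset (M+2)).filter (fun q => q.2.2 = 0)).card = M + 3 := by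
    rw [show M + 3 = (Finset.range (M+3)).card by simp]
    apply Finset.card_nbij' (fun q => q.1) (fun a => (a, M + 2 - a, 0))
    · intro q hq
      obtain ⟨a, b, c⟩ := q
      simp only [Vset, Finset.mem_coe, Finset.mem_filter, Finset.mem_product, Finset.mem_range, Prod.mk.injEq, true_and, and_true] at hq ⊢
      omega
    · intro a ha
      simp only [Vset, Finset.mem_coe, Finset.mem_filter, Finset.mem_product, Finset.mem_range, Prod.mk.injEq, true_and, and_true] at ha ⊢
      omega
    · intro q hq
      obtain ⟨a, b, c⟩ := q
      simp only [Vset, Finset.mem_coe, Finset.mem_filter, Finset.mem_product, Finset.mem_range, Prod.mk.injEq, true_and, and_true] at hq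
      simp only [Prod.mk.injEq, true_and, and_true]
      omega
    · intro a ha
      rfl
  omega

lemma urec (M : ℕ) : (Uset (M+2)).card = (Uset M).card + (Vset (M+2)).card := by
  classical
  have hsplit := Finset.card_filter_add_card_filter_not
    (s := Uset (M+2)) (p := fun q => q.2.2.2 = 0)
  have h1 : ((Uset (M+2)).filter (fun q => ¬ q.2.2.2 = 0)).card = (Uset M).card := by
    apply Finset.card_nbij' (fun q => (q.1, q.2.1, q.2.2.1, q.2.2.2 - 1))
      (fun q => (q.1, q.2.1, q.2.2.1, q.2.2.2 + 1))
    · intro q hq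
      obtain ⟨a, b, c, d⟩ := q
      simp only [Uset, Finset.mem_coe, Finset.mem_filter, Finset.mem_product, Finset.mem_range, Prod.mk.injEq, true_and, and_true] at hq ⊢
      omega
    · intro q hq
      obtain ⟨a, b, c, d⟩ := q
      simp only [Uset, Finset.mem_coe, Finset.mem_filter, Finset.mem_product, Finset.mem_range, Prod.mk.injEq, true_and, and_true] at hq ⊢
      omega
    · intro q hq
      obtain ⟨a, b, c, d⟩ := q
      simp only [Uset, Finset.mem_coe, Finset.mem_filter, Finset.mem_product, Finset.mem_range, Prod.mk.injEq, true_and, and_true] at hq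
      simp only [Prod.mk.injEq, true_and, and_true]
      omega
    · intro q hq
      obtain ⟨a, b, c, d⟩ := q
      simp only [Prod.mk.injEq, true_and, and_true]
      omega
  have h2 : ((Uset (M+2)).filter (fun q => q.2.2.2 = 0)).card = (Vset (M+2)).card := by
    apply Finset.card_nbij' (fun q => (q.1, q.2.1, q.2.2.1)) (fun q => (q.1, q.2.1, q.2.2, 0))
    · intro q hq
      obtain ⟨a, b, c, d⟩ := q
      simp only [Uset, Vset, Finset.mem_coe, Finset.mem_filter, Finset.mem_product, Finset.mem_range, Prod.mk.injEq, true_and, and_true] at hq ⊢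
      omega
    · intro q hq
      obtain ⟨a, b, c⟩ := q
      simp only [Uset, Vset, Finset.mem_coe, Finset.mem_filter, Finset.mem_product, Finset.mem_range, Prod.mk.injEq, true_and, and_true] at hq ⊢
      omega
    · intro q hq
      obtain ⟨a, b, c, d⟩ := q
      simp only [Uset, Finset.mem_coe, Finset.mem_filter, Finset.mem_product, Finset.mem_range, Prod.mk.injEq, true_and, and_true] at hq
      simp only [Prod.mk.injEq, true_and, and_true]
      omega
    · intro q hq
      rfl
  omega

lemma veven (k : ℕ) : (Vset (2*k)).card = (k+1)^2 := by
  induction k with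
  | zero => decide
  | succ k ih =>
    have h : 2 * (k+1) = 2*k + 2 := by ring
    rw [h, vrec, ih]
    ring

lemma vodd (k : ℕ) : (Vset (2*k+1)).card = (k+1)*(k+2) := by
  induction k with
  | zero => decide
  | succ k ih =>
    have h : 2 * (k+1) + 1 = (2*k+1) + 2 := by ring
    rw [h, vrec, ih]
    ring

lemma ueven (k : ℕ) : 6 * (Uset (2*k)).card = (k+1)*(k+2)*(2*k+3) := by
  induction k with
  | zero => decide
  | succ k ih =>
    have h : 2 * (k+1) = 2*k + 2 := by ring
    have hv : 2*k + 2 = 2*(k+1) := by ring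
    rw [h, urec, hv, veven]
    have : 6 * ((Uset (2*k)).card + (k+1+1)^2) = 6 * (Uset (2*k)).card + 6 * (k+2)^2 := by ring
    rw [this, ih]
    ring

lemma uodd (k : ℕ) : 3 * (Uset (2*k+1)).card = (k+1)*(k+2)*(k+3) := by
  induction k with
  | zero => decide
  | succ k ih =>
    have h : 2 * (k+1) + 1 = (2*k+1) + 2 := by ring
    have hv : (2*k+1) + 2 = 2*(k+1)+1 := by ring
    rw [h, urec, hv, vodd]
    have : 3 * ((Uset (2*k+1)).card + (k+1+1)*(k+1+2)) =
        3 * (Uset (2*k+1)).card + 3 * ((k+2)*(k+3)) := by ring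
    rw [this, ih]
    ring

lemma key (r : ℕ) : Set.ncard {t : ℕ × ℕ × ℕ |
      t.1 % 2 = r % 2 ∧ t.2.2 % 2 = r % 2 ∧
      (t.1 + 2 * (t.2.1 + t.2.2)) % 4 = (r + 2) % 4 ∧
      t.1 + 2 * (t.2.1 + t.2.2) ≤ r + 2} = (Uset ((r + 2 - 3 * (r % 2)) / 2)).card := by
  classical
  set M := (r + 2 - 3 * (r % 2)) / 2 with hMdef
  have hM : 2 * M + 3 * (r % 2) = r + 2 := by omega
  set T : Finset (ℕ × ℕ × ℕ) :=
    ((Finset.range (r+3)) ×ˢ (Finset.range (r+3)) ×ˢ (Finset.range (r+3))).filter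
      (fun t => t.1 % 2 = r % 2 ∧ t.2.2 % 2 = r % 2 ∧
        (t.1 + 2 * (t.2.1 + t.2.2)) % 4 = (r + 2) % 4 ∧
        t.1 + 2 * (t.2.1 + t.2.2) ≤ r + 2) with hT
  have hset : {t : ℕ × ℕ × ℕ |
      t.1 % 2 = r % 2 ∧ t.2.2 % 2 = r % 2 ∧
      (t.1 + 2 * (t.2.1 + t.2.2)) % 4 = (r + 2) % 4 ∧
      t.1 + 2 * (t.2.1 + t.2.2) ≤ r + 2} = ↑T := by
    ext ⟨F, cp, cm⟩
    simp only [hT, Set.mem_setOf_eq, Finset.coe_filter, Finset.mem_product, Finset.mem_range,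
      Set.mem_setOf_eq]
    constructor
    · intro h
      refine ⟨⟨?_, ?_, ?_⟩, h⟩ <;> omega
    · intro h
      exact h.2
  rw [hset, Set.ncard_coe_finset]
  apply Finset.card_nbij'
    (fun t => ((t.1 - r % 2)/2, t.2.1, (t.2.2 - r % 2)/2,
      (M - ((t.1 - r % 2)/2 + t.2.1 + (t.2.2 - r % 2)))/2))
    (fun q => (2*q.1 + r % 2, q.2.1, 2*q.2.2.1 + r % 2))
  · intro t ht
    obtain ⟨F, cp, cm⟩ := t
    simp only [hT, Uset, Finset.mem_coe, Finset.mem_filter, Finset.mem_product, Finset.mem_range, Prod.mk.injEq, true_and, and_true] at ht ⊢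
    omega
  · intro q hq
    obtain ⟨a, b, c, d⟩ := q
    simp only [hT, Uset, Finset.mem_coe, Finset.mem_filter, Finset.mem_product, Finset.mem_range, Prod.mk.injEq, true_and, and_true] at hq ⊢
    omega
  · intro t ht
    obtain ⟨F, cp, cm⟩ := t
    simp only [hT, Finset.mem_coe, Finset.mem_filter, Finset.mem_product, Finset.mem_range, Prod.mk.injEq, true_and, and_true] at ht
    simp only [Prod.mk.injEq, true_and, and_true]
    omega
  · intro q hq
    obtain ⟨a, b, c, d⟩ := q
    simp only [hT, Uset, Finset.mem_coe, Finset.mem_filter, Finset.mem_product, Finset.mem_range, Prod.mk.injEq, true_and, and_true] at hq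
    simp only [Prod.mk.injEq, true_and, and_true]
    omega

/-- Closed formulas for `B(r)`, the number of triples `(F, C₊, C₋)` of nonnegative integers
with `F ≡ C₋ ≡ r (mod 2)`, `F + 2(C₊ + C₋) ≡ r + 2 (mod 4)`, and `F + 2(C₊ + C₋) ≤ r + 2`. -/
theorem count_B_formula (r : ℕ) (B : ℕ)
    (hB : B = Set.ncard {t : ℕ × ℕ × ℕ |
      t.1 % 2 = r % 2 ∧ t.2.2 % 2 = r % 2 ∧
      (t.1 + 2 * (t.2.1 + t.2.2)) % 4 = (r + 2) % 4 ∧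
      t.1 + 2 * (t.2.1 + t.2.2) ≤ r + 2}) :
    (r % 4 = 0 → 192 * B = (r + 4) * (r + 8) * (r + 12)) ∧
    (r % 4 = 2 → 192 * B = (r + 6) * (r + 8) * (r + 10)) ∧
    (r % 4 = 1 → 192 * B = (r + 3) * (r + 5) * (r + 7)) ∧
    (r % 4 = 3 → 192 * B = (r + 1) * (r + 5) * (r + 9)) := by
  rw [key r] at hB
  refine ⟨?_, ?_, ?_, ?_⟩ <;> intro hr
  · obtain ⟨m, rfl⟩ : ∃ m, r = 4*m := ⟨r/4, by omega⟩
    have hM : (4*m + 2 - 3 * ((4*m) % 2)) / 2 = 2*m + 1 := by omega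
    rw [hM] at hB
    have h := uodd m
    calc 192 * B = 64 * (3 * (Uset (2*m+1)).card) := by rw [hB]; ring
    _ = 64 * ((m+1)*(m+2)*(m+3)) := by rw [h]
    _ = (4*m + 4) * (4*m + 8) * (4*m + 12) := by ring
  · obtain ⟨m, rfl⟩ : ∃ m, r = 4*m + 2 := ⟨r/4, by omega⟩
    have hM : (4*m + 2 + 2 - 3 * ((4*m+2) % 2)) / 2 = 2*(m+1) := by omega
    rw [hM] at hB
    have h := ueven (m+1)
    calc 192 * B = 32 * (6 * (Uset (2*(m+1))).card) := by rw [hB]; ring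
    _ = 32 * ((m+1+1)*(m+1+2)*(2*(m+1)+3)) := by rw [h]
    _ = (4*m + 2 + 6) * (4*m + 2 + 8) * (4*m + 2 + 10) := by ring
  · obtain ⟨m, rfl⟩ : ∃ m, r = 4*m + 1 := ⟨r/4, by omega⟩
    have hM : (4*m + 1 + 2 - 3 * ((4*m+1) % 2)) / 2 = 2*m := by omega
    rw [hM] at hB
    have h := ueven m
    calc 192 * B = 32 * (6 * (Uset (2*m)).card) := by rw [hB]; ring
    _ = 32 * ((m+1)*(m+2)*(2*m+3)) := by rw [h]
    _ = (4*m + 1 + 3) * (4*m + 1 + 5) * (4*m + 1 + 7) := by ring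
  · obtain ⟨m, rfl⟩ : ∃ m, r = 4*m + 3 := ⟨r/4, by omega⟩
    have hM : (4*m + 3 + 2 - 3 * ((4*m+3) % 2)) / 2 = 2*m + 1 := by omega
    rw [hM] at hB
    have h := uodd m
    calc 192 * B = 64 * (3 * (Uset (2*m+1)).card) := by rw [hB]; ring
    _ = 64 * ((m+1)*(m+2)*(m+3)) := by rw [h]
    _ = (4*m + 3 + 1) * (4*m + 3 + 5) * (4*m + 3 + 9) := by ring
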